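/- Let ρ be a nonsingular quadratic form of dimension n over F and let λ, μ ∈ F^×. Then there is an isometry (ρ ⊥ λ·ρ) ⊥ (ρ ⊥ μ·ρ) ⊥ n×ℍ ≃ (ρ ⊥ (λμ)·ρ) ⊥ (ρ ⊥ λ·ρ ⊥ μ·ρ ⊥ (λμ)·ρ). (This expresses the identity ⟨⟨λ⟩⟩⊗ρ + ⟨⟨μ⟩⟩⊗ρ = ⟨⟨λμ⟩⟩⊗ρ + ⟨⟨λ,μ⟩⟩⊗ρ in the Witt group of nonsingular quadratic forms, i.e. the congruence ⟨⟨λ⟩⟩⊗ρ ⊥ ⟨⟨μ⟩⟩⊗ρ ≡ ⟨⟨λμ⟩⟩⊗ρ mod I_q^{m+2}(F) when ρ lies in I_q^m(F).) -/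

import Mathlib

open QuadraticMap LinearMap

/-- The binary quadratic form `[b₁,b₂] : (x,y) ↦ b₁x² + xy + b₂y²` on `F × F`. -/
def binQF (F : Type*) [Field F] (b₁ b₂ : F) : QuadraticForm F (F × F) :=
  LinearMap.BilinMap.toQuadraticMap (LinearMap.mk₂ F
    (fun p q : F × F => b₁ * (p.1 * q.1) + p.1 * q.2 + b₂ * (p.2 * q.2))
    (fun p p' q => by simp only [Prod.fst_add, Prod.snd_add]; ring)
    (fun a p q => by simp only [Prod.smul_fst, Prod.smul_snd, smul_eq_mul]; ring)
    (fun p q q' => by simp only [Prod.fst_add, Prod.snd_add]; ring)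
    (fun a p q => by simp only [Prod.smul_fst, Prod.smul_snd, smul_eq_mul]; ring))

lemma binQF_apply (F : Type*) [Field F] (z : F × F) : binQF F 0 0 z = z.1 * z.2 := by
  simp [binQF, LinearMap.BilinMap.toQuadraticMap_apply]

/-- product-of-functions linear equiv -/
def piProdEquiv (F : Type*) [Field F] (n : ℕ) :
    ((Fin n → F) × (Fin n → F)) ≃ₗ[F] (Fin n → F × F) where
  toFun z i := (z.1 i, z.2 i)
  invFun z := (fun i => (z i).1, fun i => (z i).2)
  map_add' _ _ := rfl
  map_smul' _ _ := rfl
  left_inv _ := rfl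
  right_inv _ := rfl

theorem keyA {F : Type*} [Field F] [CharP F 2]
    {V : Type*} [AddCommGroup V] [Module F V] [FiniteDimensional F V] {n : ℕ}
    (hdim : Module.finrank F V = n)
    (q : QuadraticForm F V) (hq : (QuadraticMap.polarBilin q).Nondegenerate) :
    QuadraticMap.Equivalent (q.prod q) (QuadraticMap.pi fun _ : Fin n => binQF F 0 0) := by
  classical
  set b : Module.Basis (Fin n) F V := Module.finBasisOfFinrankEq F V hdim with hb
  set B : LinearMap.BilinMap F V F := q.toBilin b with hBdef
  have hB : ∀ x, B x x = q x := fun x => by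
    rw [← toQuadraticMap_toBilin q b, LinearMap.BilinMap.toQuadraticMap_apply]
  set p : LinearMap.BilinForm F V := QuadraticMap.polarBilin q with hpdef
  have hq' : LinearMap.BilinForm.Nondegenerate p := hq
  have hp : ∀ x y, p x y = polar q x y := fun x y => rfl
  have psymm : ∀ x y, p x y = p y x := fun x y => polar_comm q x y
  -- the "half" endomorphism s with p u (s v) = B u v
  set s : V →ₗ[F] V := (p.toDual hq').symm.toLinearMap ∘ₗ B.flip with hsdef
  have hs : ∀ u v, p u (s v) = B u v := by
    intro u v
    rw [psymm]
    exact LinearMap.BilinForm.apply_toDual_symm_apply (hB := hq') _ _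
  -- the shear linear equivalence
  set T : (V × V) →ₗ[F] (V × V) :=
    LinearMap.prod (fst F V V + snd F V V)
      (snd F V V + s ∘ₗ (fst F V V + snd F V V)) with hTdef
  set Ti : (V × V) →ₗ[F] (V × V) :=
    LinearMap.prod (fst F V V - snd F V V + s ∘ₗ fst F V V)
      (snd F V V - s ∘ₗ fst F V V) with hTidef
  have hTT : Ti ∘ₗ T = LinearMap.id := by
    apply LinearMap.ext; rintro ⟨x, y⟩
    simp [hTdef, hTidef, Prod.ext_iff]
    try constructor
    all_goals abel
  have hTT' : T ∘ₗ Ti = LinearMap.id := by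
    apply LinearMap.ext; rintro ⟨u, w⟩
    simp [hTdef, hTidef, Prod.ext_iff]
    try constructor
    all_goals abel
  set Te : (V × V) ≃ₗ[F] (V × V) := LinearEquiv.ofLinear T Ti hTT' hTT with hTe
  -- intermediate quadratic form (u,w) ↦ p u w
  set Qb : QuadraticForm F (V × V) :=
    LinearMap.BilinMap.toQuadraticMap (p.compl₁₂ (fst F V V) (snd F V V)) with hQb
  have hQbapp : ∀ z : V × V, Qb z = p z.1 z.2 := fun z => by
    rw [hQb, LinearMap.BilinMap.toQuadraticMap_apply]; rfl
  have iso1 : QuadraticMap.IsometryEquiv (q.prod q) Qb := by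
    refine ⟨Te, fun z => ?_⟩
    obtain ⟨x, y⟩ := z
    change Qb (Te (x, y)) = (q.prod q) (x, y)
    have hTz : (Te (x, y) : V × V) = (x + y, y + s (x + y)) := rfl
    rw [hTz, hQbapp]
    rw [QuadraticMap.prod_apply]
    have e1 : p (x + y) (y + s (x + y)) = p (x + y) y + p (x + y) (s (x + y)) :=
      map_add _ _ _
    rw [e1, hs, hB]
    have e2 : p (x + y) y = p x y + p y y := by rw [map_add, LinearMap.add_apply]
    have hpy : p y y = 0 := by
      rw [hp, polar_self, two_smul, CharTwo.add_self_eq_zero]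
    have hqxy : q (x + y) = q x + q y + p x y := by
      rw [hp]; simp only [QuadraticMap.polar]; ring
    rw [e2, hpy, hqxy, add_zero]
    have h2 : p x y + p x y = 0 := CharTwo.add_self_eq_zero _
    linear_combination h2
  -- dual basis
  set f : Module.Basis (Fin n) F V := p.dualBasis hq' b with hf
  have hbf : ∀ i j, p (b i) (f j) = if i = j then 1 else 0 := by
    intro i j
    rw [psymm]
    rw [hf, LinearMap.BilinForm.apply_dualBasis_left (B := p) hq' b j i]
  -- sum formula
  have hsum : ∀ u w, p u w = ∑ i, b.repr u i * f.repr w i := by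
    let M : V →ₗ[F] V →ₗ[F] F := LinearMap.mk₂ F
      (fun u w : V => ∑ i, b.repr u i * f.repr w i)
      (fun u u' w => by simp [map_add, add_mul, Finset.sum_add_distrib])
      (fun c u w => by simp [Finset.mul_sum, mul_assoc])
      (fun u w w' => by simp [map_add, mul_add, Finset.sum_add_distrib])
      (fun c u w => by simp [Finset.mul_sum, mul_left_comm])
    have hpM : p = M := by
      apply b.ext; intro i; apply f.ext; intro j
      rw [hbf]
      simp only [M, LinearMap.mk₂_apply, Module.Basis.repr_self, Finsupp.single_apply]
      simp [Finset.sum_ite_eq, eq_comm]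
    intro u w
    rw [hpM]
    simp only [M, LinearMap.mk₂_apply]
  -- second isometry
  set L : (V × V) ≃ₗ[F] (Fin n → F × F) :=
    (LinearEquiv.prodCongr b.equivFun f.equivFun).trans (piProdEquiv F n) with hL
  have iso2 : QuadraticMap.IsometryEquiv Qb (QuadraticMap.pi fun _ : Fin n => binQF F 0 0) := by
    refine ⟨L, fun z => ?_⟩
    change (QuadraticMap.pi fun _ : Fin n => binQF F 0 0) (L z) = Qb z
    rw [QuadraticMap.pi_apply, hQbapp, hsum]
    apply Finset.sum_congr rfl
    intro i _
    rw [binQF_apply]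
    simp [hL, piProdEquiv, LinearEquiv.prodCongr_apply, Module.Basis.equivFun_apply]
  exact ⟨iso1.trans iso2⟩

/-- associativity isometry for orthogonal sums -/
def isoAssoc {F : Type*} [Field F] {M₁ M₂ M₃ : Type*}
    [AddCommGroup M₁] [Module F M₁] [AddCommGroup M₂] [Module F M₂]
    [AddCommGroup M₃] [Module F M₃]
    (Q₁ : QuadraticForm F M₁) (Q₂ : QuadraticForm F M₂) (Q₃ : QuadraticForm F M₃) :
    QuadraticMap.IsometryEquiv ((Q₁.prod Q₂).prod Q₃) (Q₁.prod (Q₂.prod Q₃)) where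
  toLinearEquiv := LinearEquiv.prodAssoc F M₁ M₂ M₃
  map_app' z := by
    obtain ⟨⟨x, y⟩, w⟩ := z
    simp [QuadraticMap.prod_apply, add_assoc, LinearEquiv.prodAssoc]

lemma smul_nondeg {F : Type*} [Field F] {V : Type*} [AddCommGroup V] [Module F V]
    (q : QuadraticForm F V) (hq : (QuadraticMap.polarBilin q).Nondegenerate)
    {c : F} (hc : c ≠ 0) : (QuadraticMap.polarBilin (c • q)).Nondegenerate := by
  have h : ∀ x y, QuadraticMap.polarBilin (c • q) x y
      = c * QuadraticMap.polarBilin q x y := by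
    intro x y
    show polar (⇑(c • q)) x y = c * polar (⇑q) x y
    rw [QuadraticMap.coeFn_smul, polar_smul, smul_eq_mul]
  constructor
  · intro x hx
    refine hq.1 x fun y => ?_
    have := hx y
    rw [h] at this
    exact (mul_eq_zero.mp this).resolve_left hc
  · intro y hy
    refine hq.2 y fun x => ?_
    have := hy x
    rw [h] at this
    exact (mul_eq_zero.mp this).resolve_left hc


section shuffles
variable {F : Type*} [Field F] {M₁ M₂ M₃ M₄ : Type*}
  [AddCommGroup M₁] [Module F M₁] [AddCommGroup M₂] [Module F M₂]
  [AddCommGroup M₃] [Module F M₃] [AddCommGroup M₄] [Module F M₄]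

lemma eassoc (Q₁ : QuadraticForm F M₁) (Q₂ : QuadraticForm F M₂) (Q₃ : QuadraticForm F M₃) :
    QuadraticMap.Equivalent ((Q₁.prod Q₂).prod Q₃) (Q₁.prod (Q₂.prod Q₃)) :=
  ⟨isoAssoc Q₁ Q₂ Q₃⟩

lemma ecomm (Q₁ : QuadraticForm F M₁) (Q₂ : QuadraticForm F M₂) :
    QuadraticMap.Equivalent (Q₁.prod Q₂) (Q₂.prod Q₁) :=
  ⟨QuadraticMap.IsometryEquiv.prodComm Q₁ Q₂⟩

lemma e4 (Q₁ : QuadraticForm F M₁) (Q₂ : QuadraticForm F M₂) (Q₃ : QuadraticForm F M₃)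
    (Q₄ : QuadraticForm F M₄) :
    QuadraticMap.Equivalent ((Q₁.prod Q₂).prod (Q₃.prod Q₄))
      ((Q₁.prod Q₃).prod (Q₂.prod Q₄)) :=
  ⟨QuadraticMap.IsometryEquiv.prodProdProdComm Q₁ Q₂ Q₃ Q₄⟩

lemma erfl (Q₁ : QuadraticForm F M₁) : QuadraticMap.Equivalent Q₁ Q₁ :=
  QuadraticMap.Equivalent.refl Q₁

end shuffles

theorem stmt6 (F : Type*) [Field F] [CharP F 2]
    (V : Type*) [AddCommGroup V] [Module F V] [FiniteDimensional F V] (n : ℕ)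
    (hdim : Module.finrank F V = n)
    (ρ : QuadraticForm F V) (hρ : (QuadraticMap.polarBilin ρ).Nondegenerate)
    (l m : F) (hl : l ≠ 0) (hm : m ≠ 0) :
    QuadraticMap.Equivalent
      ((ρ.prod (l • ρ)).prod ((ρ.prod (m • ρ)).prod
        (QuadraticMap.pi (fun _ : Fin n => binQF F 0 0))))
      ((ρ.prod ((l * m) • ρ)).prod
        ((ρ.prod (l • ρ)).prod ((m • ρ).prod ((l * m) • ρ)))) := by
  set H : QuadraticForm F (Fin n → F × F) :=
    QuadraticMap.pi (fun _ : Fin n => binQF F 0 0) with hH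
  have key1 : QuadraticMap.Equivalent (ρ.prod ρ) H := keyA hdim ρ hρ
  have hlm : (QuadraticMap.polarBilin ((l * m) • ρ)).Nondegenerate :=
    smul_nondeg ρ hρ (mul_ne_zero hl hm)
  have key2 : QuadraticMap.Equivalent (((l * m) • ρ).prod ((l * m) • ρ)) H :=
    keyA hdim ((l * m) • ρ) hlm
  -- LHS chain
  have lhs : QuadraticMap.Equivalent
      ((ρ.prod (l • ρ)).prod ((ρ.prod (m • ρ)).prod H))
      (H.prod (H.prod ((l • ρ).prod (m • ρ)))) := by
    have s1 : QuadraticMap.Equivalent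
        ((ρ.prod (l • ρ)).prod ((ρ.prod (m • ρ)).prod H))
        (((ρ.prod (l • ρ)).prod (ρ.prod (m • ρ))).prod H) :=
      (eassoc (ρ.prod (l • ρ)) (ρ.prod (m • ρ)) H).symm
    have s2 : QuadraticMap.Equivalent
        (((ρ.prod (l • ρ)).prod (ρ.prod (m • ρ))).prod H)
        (((ρ.prod ρ).prod ((l • ρ).prod (m • ρ))).prod H) :=
      QuadraticMap.Equivalent.prod (e4 ρ (l • ρ) ρ (m • ρ)) (erfl H)
    have s3 : QuadraticMap.Equivalent
        (((ρ.prod ρ).prod ((l • ρ).prod (m • ρ))).prod H)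
        ((H.prod ((l • ρ).prod (m • ρ))).prod H) :=
      QuadraticMap.Equivalent.prod (QuadraticMap.Equivalent.prod key1 (erfl _)) (erfl H)
    have s4 : QuadraticMap.Equivalent
        ((H.prod ((l • ρ).prod (m • ρ))).prod H)
        (H.prod (H.prod ((l • ρ).prod (m • ρ)))) :=
      ecomm (H.prod ((l • ρ).prod (m • ρ))) H
    exact ((s1.trans s2).trans s3).trans s4
  -- RHS chain
  have rhs : QuadraticMap.Equivalent
      ((ρ.prod ((l * m) • ρ)).prod ((ρ.prod (l • ρ)).prod ((m • ρ).prod ((l * m) • ρ))))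
      (H.prod (H.prod ((l • ρ).prod (m • ρ)))) := by
    have s1 : QuadraticMap.Equivalent
        ((ρ.prod ((l * m) • ρ)).prod ((ρ.prod (l • ρ)).prod ((m • ρ).prod ((l * m) • ρ))))
        (((ρ.prod ((l * m) • ρ)).prod (ρ.prod (l • ρ))).prod ((m • ρ).prod ((l * m) • ρ))) :=
      (eassoc (ρ.prod ((l * m) • ρ)) (ρ.prod (l • ρ)) ((m • ρ).prod ((l * m) • ρ))).symm
    have s2 : QuadraticMap.Equivalent
        (((ρ.prod ((l * m) • ρ)).prod (ρ.prod (l • ρ))).prod ((m • ρ).prod ((l * m) • ρ)))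
        (((ρ.prod ρ).prod (((l * m) • ρ).prod (l • ρ))).prod ((m • ρ).prod ((l * m) • ρ))) :=
      QuadraticMap.Equivalent.prod (e4 ρ ((l * m) • ρ) ρ (l • ρ)) (erfl _)
    have s3 : QuadraticMap.Equivalent
        (((ρ.prod ρ).prod (((l * m) • ρ).prod (l • ρ))).prod ((m • ρ).prod ((l * m) • ρ)))
        ((H.prod (((l * m) • ρ).prod (l • ρ))).prod ((m • ρ).prod ((l * m) • ρ))) :=
      QuadraticMap.Equivalent.prod (QuadraticMap.Equivalent.prod key1 (erfl _)) (erfl _)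
    have s4 : QuadraticMap.Equivalent
        ((H.prod (((l * m) • ρ).prod (l • ρ))).prod ((m • ρ).prod ((l * m) • ρ)))
        (H.prod ((((l * m) • ρ).prod (l • ρ)).prod ((m • ρ).prod ((l * m) • ρ)))) :=
      eassoc H (((l * m) • ρ).prod (l • ρ)) ((m • ρ).prod ((l * m) • ρ))
    have s5 : QuadraticMap.Equivalent
        (H.prod ((((l * m) • ρ).prod (l • ρ)).prod ((m • ρ).prod ((l * m) • ρ))))
        (H.prod (((l • ρ).prod ((l * m) • ρ)).prod ((m • ρ).prod ((l * m) • ρ)))) :=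
      QuadraticMap.Equivalent.prod (erfl H)
        (QuadraticMap.Equivalent.prod (ecomm ((l * m) • ρ) (l • ρ)) (erfl _))
    have s6 : QuadraticMap.Equivalent
        (H.prod (((l • ρ).prod ((l * m) • ρ)).prod ((m • ρ).prod ((l * m) • ρ))))
        (H.prod (((l • ρ).prod (m • ρ)).prod (((l * m) • ρ).prod ((l * m) • ρ)))) :=
      QuadraticMap.Equivalent.prod (erfl H) (e4 (l • ρ) ((l * m) • ρ) (m • ρ) ((l * m) • ρ))
    have s7 : QuadraticMap.Equivalent
        (H.prod (((l • ρ).prod (m • ρ)).prod (((l * m) • ρ).prod ((l * m) • ρ))))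
        (H.prod (((l • ρ).prod (m • ρ)).prod H)) :=
      QuadraticMap.Equivalent.prod (erfl H) (QuadraticMap.Equivalent.prod (erfl _) key2)
    have s8 : QuadraticMap.Equivalent
        (H.prod (((l • ρ).prod (m • ρ)).prod H))
        (H.prod (H.prod ((l • ρ).prod (m • ρ)))) :=
      QuadraticMap.Equivalent.prod (erfl H) (ecomm ((l • ρ).prod (m • ρ)) H)
    exact s1.trans (s2.trans (s3.trans (s4.trans (s5.trans (s6.trans (s7.trans s8))))))
  exact lhs.trans rhs.symm
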